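/- The function c_uc^{unif}(γ) = γ ∑_{i=0}^{∞} (γ^i/i!) e^{−γ} log₂((i+1)/γ) satisfies lim_{γ → ∞} c_uc^{unif}(γ) = (log₂ e)/2. -/

import Mathlib

open Filter Real

noncomputable def Gfun (t : ℝ) : ℝ := Real.log t - (t-1) + (t-1)^2/2

lemma hasDerivAt_Gfun {t : ℝ} (ht : 0 < t) :
    HasDerivAt Gfun ((t-1)^2/t) t := by
  have h1 := Real.hasDerivAt_log (ne_of_gt ht)
  have h2 : HasDerivAt (fun s : ℝ => s - 1) 1 t := (hasDerivAt_id t).sub_const 1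
  have h3 : HasDerivAt (fun s : ℝ => (s-1)^2/2) (t-1) t := by
    have := (h2.pow 2).div_const 2
    simpa using this
  have := (h1.sub h2).add h3
  refine this.congr_deriv ?_
  field_simp
  ring

lemma Gfun_mono : MonotoneOn Gfun (Set.Ioi (0:ℝ)) := by
  apply monotoneOn_of_deriv_nonneg (convex_Ioi 0)
  · intro x hx
    exact (hasDerivAt_Gfun hx).continuousAt.continuousWithinAt
  · intro x hx
    rw [interior_Ioi] at hx
    exact (hasDerivAt_Gfun hx).differentiableAt.differentiableWithinAt
  · intro x hx
    rw [interior_Ioi] at hx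
    rw [(hasDerivAt_Gfun hx).deriv]
    exact div_nonneg (sq_nonneg _) hx.le

lemma Gfun_upper {t : ℝ} (ht : 1 ≤ t) : Gfun t ≤ (t-1)^3/3 := by
  set H : ℝ → ℝ := fun s => (s-1)^3/3 - Gfun s with hH
  have hd : ∀ s : ℝ, 0 < s → HasDerivAt H ((s-1)^2 - (s-1)^2/s) s := by
    intro s hs
    have h2 : HasDerivAt (fun u : ℝ => u - 1) 1 s := (hasDerivAt_id s).sub_const 1
    have h1 : HasDerivAt (fun u : ℝ => (u-1)^3/3) ((s-1)^2) s := by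
      have := (h2.pow 3).div_const 3
      exact this.congr_deriv (by norm_num)
    exact h1.sub (hasDerivAt_Gfun hs)
  have hmono : MonotoneOn H (Set.Ici (1:ℝ)) := by
    apply monotoneOn_of_deriv_nonneg (convex_Ici 1)
    · intro x hx
      have hx0 : (0:ℝ) < x := lt_of_lt_of_le one_pos hx
      exact (hd x hx0).continuousAt.continuousWithinAt
    · intro x hx
      rw [interior_Ici] at hx
      exact (hd x (lt_trans one_pos hx)).differentiableAt.differentiableWithinAt
    · intro x hx
      rw [interior_Ici] at hx
      have hx0 : (0:ℝ) < x := lt_trans one_pos hx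
      rw [(hd x hx0).deriv]
      have : (x-1)^2 - (x-1)^2/x = (x-1)^2*(x-1)/x := by field_simp
      rw [this]
      have hx1 : (1:ℝ) < x := hx
      exact div_nonneg (mul_nonneg (sq_nonneg _) (by linarith)) (by linarith)
  have h0 : H 1 = 0 := by simp [hH, Gfun]
  have := hmono (Set.mem_Ici.2 le_rfl) (Set.mem_Ici.2 ht) ht
  rw [h0] at this
  simpa [hH, sub_nonneg] using this

lemma Gfun_lower {t : ℝ} (ht0 : 0 < t) (ht : t ≤ 1) : -Gfun t ≤ (1-t)^3/(3*t) := by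
  set Φ : ℝ → ℝ := fun s => (1-s)^3/(3*s) + Gfun s with hΦ
  have hd : ∀ s : ℝ, 0 < s →
      HasDerivAt Φ ((-3*(1-s)^2*(3*s) - (1-s)^3*3)/(3*s)^2 + (s-1)^2/s) s := by
    intro s hs
    have h2 : HasDerivAt (fun u : ℝ => 1 - u) (-1) s := by
      simpa using (hasDerivAt_id s).const_sub 1
    have hu : HasDerivAt (fun u : ℝ => (1-u)^3) (-3*(1-s)^2) s := by
      have := h2.pow 3
      exact this.congr_deriv (by norm_num)
    have hv : HasDerivAt (fun u : ℝ => 3*u) 3 s := by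
      simpa using (hasDerivAt_id s).const_mul 3
    have h1 : HasDerivAt (fun u : ℝ => (1-u)^3/(3*u))
        ((-3*(1-s)^2*(3*s) - (1-s)^3*3)/(3*s)^2) s := by
      exact hu.div hv (by positivity)
    exact h1.add (hasDerivAt_Gfun hs)
  have hanti : AntitoneOn Φ (Set.Ioc (0:ℝ) 1) := by
    apply antitoneOn_of_deriv_nonpos (convex_Ioc 0 1)
    · intro x hx
      exact (hd x hx.1).continuousAt.continuousWithinAt
    · intro x hx
      rw [interior_Ioc] at hx
      exact (hd x hx.1).differentiableAt.differentiableWithinAt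
    · intro x hx
      rw [interior_Ioc] at hx
      rw [(hd x hx.1).deriv]
      have hx0 := hx.1
      have hx1 := hx.2
      have : (-3*(1-x)^2*(3*x) - (1-x)^3*3)/(3*x)^2 + (x-1)^2/x = -((1-x)^3/(3*x^2)) := by
        field_simp
        ring
      rw [this]
      have : (0:ℝ) ≤ (1-x)^3/(3*x^2) := by
        apply div_nonneg (pow_nonneg (by linarith) 3)
        nlinarith [sq_nonneg x]
      linarith
  have h1 : Φ 1 = 0 := by simp [hΦ, Gfun]
  have := hanti (Set.mem_Ioc.2 ⟨ht0, ht⟩) (Set.mem_Ioc.2 ⟨one_pos, le_rfl⟩) ht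
  rw [h1] at this
  have : 0 ≤ Φ t := this
  rw [hΦ] at this
  simp only at this
  linarith [this]

lemma abs_Gfun_le {t : ℝ} (ht : 0 < t) :
    |Real.log t - (t-1) + (t-1)^2/2| ≤ |t-1|^3/3 * (1 + 1/t) := by
  have hfac : (1:ℝ) ≤ 1 + 1/t := by
    have : (0:ℝ) < 1/t := by positivity
    linarith
  rcases le_or_gt 1 t with h | h
  · have hG0 : 0 ≤ Gfun t := by
      have := Gfun_mono (Set.mem_Ioi.2 one_pos) (Set.mem_Ioi.2 (lt_of_lt_of_le one_pos h)) h
      simpa [Gfun] using this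
    have hup := Gfun_upper h
    rw [show Real.log t - (t-1) + (t-1)^2/2 = Gfun t from rfl, abs_of_nonneg hG0]
    have habs : |t-1|^3 = (t-1)^3 := by
      rw [abs_of_nonneg (by linarith)]
    rw [habs]
    nlinarith [Gfun_upper h, sq_nonneg (t-1), pow_nonneg (show (0:ℝ) ≤ t-1 by linarith) 3]
  · have hG0 : Gfun t ≤ 0 := by
      have := Gfun_mono (Set.mem_Ioi.2 ht) (Set.mem_Ioi.2 one_pos) h.le
      simpa [Gfun] using this
    have hlo := Gfun_lower ht h.le
    rw [show Real.log t - (t-1) + (t-1)^2/2 = Gfun t from rfl, abs_of_nonpos hG0]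
    have habs : |t-1|^3 = (1-t)^3 := by
      rw [abs_of_nonpos (by linarith)]; ring
    rw [habs]
    have h1 : (1-t)^3/(3*t) ≤ (1-t)^3/3 * (1 + 1/t) := by
      rw [div_mul_eq_mul_div, div_le_div_iff₀ (by linarith) (by norm_num)]
      have h2 : (0:ℝ) ≤ (1-t)^3 := pow_nonneg (by linarith) 3
      have : (1-t)^3 * 3 ≤ (1-t)^3 * (1+1/t) * (3*t) := by
        have : (1+1/t)*(3*t) = 3*t + 3 := by field_simp
        rw [mul_assoc, this]
        nlinarith
      linarith
    linarith


noncomputable def qf (γ : ℝ) (i : ℕ) : ℝ := γ ^ i / (Nat.factorial i : ℝ)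

lemma qf_nonneg {γ : ℝ} (hγ : 0 ≤ γ) (i : ℕ) : 0 ≤ qf γ i := by
  unfold qf; positivity

lemma sum_q (γ : ℝ) : Summable (qf γ) := Real.summable_pow_div_factorial γ

lemma tsum_q (γ : ℝ) : ∑' i : ℕ, qf γ i = Real.exp γ := by
  unfold qf
  rw [Real.exp_eq_exp_ℝ, NormedSpace.exp_eq_tsum_div]

lemma qf_succ (γ : ℝ) (i : ℕ) : qf γ (i+1) = γ / ((i:ℝ)+1) * qf γ i := by
  unfold qf
  rw [Nat.factorial_succ]
  have h1 : ((i:ℝ)+1) ≠ 0 := by positivity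
  have h2 : ((Nat.factorial i : ℕ) : ℝ) ≠ 0 := Nat.cast_ne_zero.2 (Nat.factorial_ne_zero i)
  push_cast
  field_simp
  ring

lemma shift1 (γ : ℝ) (i : ℕ) :
    (((i+1:ℕ)):ℝ) * qf γ (i+1) = γ * qf γ i := by
  rw [qf_succ]
  have h1 : ((i:ℝ)+1) ≠ 0 := by positivity
  push_cast
  field_simp

lemma sum1 (γ : ℝ) : Summable (fun i : ℕ => (i:ℝ) * qf γ i) := by
  apply (summable_nat_add_iff 1).1
  exact Summable.congr ((sum_q γ).mul_left γ) (fun i => (shift1 γ i).symm)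

lemma tsum1 (γ : ℝ) : ∑' i : ℕ, (i:ℝ) * qf γ i = γ * Real.exp γ := by
  rw [Summable.tsum_eq_zero_add (sum1 γ), tsum_congr (shift1 γ), tsum_mul_left, tsum_q]
  norm_num

lemma shift2 (γ : ℝ) (i : ℕ) :
    (((i+1:ℕ)):ℝ)^2 * qf γ (i+1) = γ * ((i:ℝ) * qf γ i) + γ * qf γ i := by
  rw [qf_succ]
  have h1 : ((i:ℝ)+1) ≠ 0 := by positivity
  push_cast
  field_simp

lemma sum2 (γ : ℝ) : Summable (fun i : ℕ => (i:ℝ)^2 * qf γ i) := by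
  apply (summable_nat_add_iff 1).1
  exact Summable.congr (((sum1 γ).mul_left γ).add ((sum_q γ).mul_left γ))
    (fun i => (shift2 γ i).symm)

lemma tsum2 (γ : ℝ) : ∑' i : ℕ, (i:ℝ)^2 * qf γ i = (γ^2 + γ) * Real.exp γ := by
  rw [Summable.tsum_eq_zero_add (sum2 γ), tsum_congr (shift2 γ),
    Summable.tsum_add ((sum1 γ).mul_left γ) ((sum_q γ).mul_left γ),
    tsum_mul_left, tsum_mul_left, tsum1, tsum_q]
  norm_num
  ring

lemma shift3 (γ : ℝ) (i : ℕ) :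
    (((i+1:ℕ)):ℝ)^3 * qf γ (i+1) =
      γ * ((i:ℝ)^2 * qf γ i) + ((2*γ) * ((i:ℝ) * qf γ i) + γ * qf γ i) := by
  rw [qf_succ]
  have h1 : ((i:ℝ)+1) ≠ 0 := by positivity
  push_cast
  field_simp
  ring

lemma sum3 (γ : ℝ) : Summable (fun i : ℕ => (i:ℝ)^3 * qf γ i) := by
  apply (summable_nat_add_iff 1).1
  exact Summable.congr (((sum2 γ).mul_left γ).add
    (((sum1 γ).mul_left (2*γ)).add ((sum_q γ).mul_left γ)))
    (fun i => (shift3 γ i).symm)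

lemma tsum3 (γ : ℝ) : ∑' i : ℕ, (i:ℝ)^3 * qf γ i = (γ^3 + 3*γ^2 + γ) * Real.exp γ := by
  rw [Summable.tsum_eq_zero_add (sum3 γ), tsum_congr (shift3 γ),
    Summable.tsum_add ((sum2 γ).mul_left γ) (((sum1 γ).mul_left (2*γ)).add ((sum_q γ).mul_left γ)),
    Summable.tsum_add ((sum1 γ).mul_left (2*γ)) ((sum_q γ).mul_left γ),
    tsum_mul_left, tsum_mul_left, tsum_mul_left, tsum1, tsum2, tsum_q]
  norm_num
  ring

lemma shift4 (γ : ℝ) (i : ℕ) :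
    (((i+1:ℕ)):ℝ)^4 * qf γ (i+1) =
      γ * ((i:ℝ)^3 * qf γ i) + ((3*γ) * ((i:ℝ)^2 * qf γ i) +
        ((3*γ) * ((i:ℝ) * qf γ i) + γ * qf γ i)) := by
  rw [qf_succ]
  have h1 : ((i:ℝ)+1) ≠ 0 := by positivity
  push_cast
  field_simp
  ring

lemma sum4 (γ : ℝ) : Summable (fun i : ℕ => (i:ℝ)^4 * qf γ i) := by
  apply (summable_nat_add_iff 1).1
  exact Summable.congr (((sum3 γ).mul_left γ).add
    (((sum2 γ).mul_left (3*γ)).add (((sum1 γ).mul_left (3*γ)).add ((sum_q γ).mul_left γ))))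
    (fun i => (shift4 γ i).symm)

lemma tsum4 (γ : ℝ) :
    ∑' i : ℕ, (i:ℝ)^4 * qf γ i = (γ^4 + 6*γ^3 + 7*γ^2 + γ) * Real.exp γ := by
  rw [Summable.tsum_eq_zero_add (sum4 γ), tsum_congr (shift4 γ),
    Summable.tsum_add ((sum3 γ).mul_left γ)
      (((sum2 γ).mul_left (3*γ)).add (((sum1 γ).mul_left (3*γ)).add ((sum_q γ).mul_left γ))),
    Summable.tsum_add ((sum2 γ).mul_left (3*γ)) (((sum1 γ).mul_left (3*γ)).add ((sum_q γ).mul_left γ)),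
    Summable.tsum_add ((sum1 γ).mul_left (3*γ)) ((sum_q γ).mul_left γ),
    tsum_mul_left, tsum_mul_left, tsum_mul_left, tsum_mul_left, tsum1, tsum2, tsum3, tsum_q]
  norm_num
  ring

/-- first centered-shifted moment -/
lemma expandC1 (γ : ℝ) (i : ℕ) :
    ((i:ℝ)+1-γ) * qf γ i = (i:ℝ) * qf γ i + (1-γ) * qf γ i := by ring

lemma sumC1 (γ : ℝ) : Summable (fun i : ℕ => ((i:ℝ)+1-γ) * qf γ i) :=
  Summable.congr ((sum1 γ).add ((sum_q γ).mul_left (1-γ))) (fun i => (expandC1 γ i).symm)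

lemma tsumC1 (γ : ℝ) : ∑' i : ℕ, ((i:ℝ)+1-γ) * qf γ i = Real.exp γ := by
  rw [tsum_congr (expandC1 γ), Summable.tsum_add (sum1 γ) ((sum_q γ).mul_left (1-γ)),
    tsum_mul_left, tsum1, tsum_q]
  ring

lemma expandC2 (γ : ℝ) (i : ℕ) :
    ((i:ℝ)+1-γ)^2 * qf γ i =
      (i:ℝ)^2 * qf γ i + ((2*(1-γ)) * ((i:ℝ) * qf γ i) + (1-γ)^2 * qf γ i) := by ring

lemma sumC2 (γ : ℝ) : Summable (fun i : ℕ => ((i:ℝ)+1-γ)^2 * qf γ i) :=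
  Summable.congr ((sum2 γ).add (((sum1 γ).mul_left (2*(1-γ))).add
    ((sum_q γ).mul_left ((1-γ)^2)))) (fun i => (expandC2 γ i).symm)

lemma tsumC2 (γ : ℝ) : ∑' i : ℕ, ((i:ℝ)+1-γ)^2 * qf γ i = (γ+1) * Real.exp γ := by
  rw [tsum_congr (expandC2 γ),
    Summable.tsum_add (sum2 γ) (((sum1 γ).mul_left (2*(1-γ))).add ((sum_q γ).mul_left ((1-γ)^2))),
    Summable.tsum_add ((sum1 γ).mul_left (2*(1-γ))) ((sum_q γ).mul_left ((1-γ)^2)),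
    tsum_mul_left, tsum_mul_left, tsum1, tsum2, tsum_q]
  ring

lemma expandCc2 (γ : ℝ) (i : ℕ) :
    ((i:ℝ)-γ)^2 * qf γ i =
      (i:ℝ)^2 * qf γ i + ((-2*γ) * ((i:ℝ) * qf γ i) + γ^2 * qf γ i) := by ring

lemma sumCc2 (γ : ℝ) : Summable (fun i : ℕ => ((i:ℝ)-γ)^2 * qf γ i) :=
  Summable.congr ((sum2 γ).add (((sum1 γ).mul_left (-2*γ)).add
    ((sum_q γ).mul_left (γ^2)))) (fun i => (expandCc2 γ i).symm)

lemma tsumCc2 (γ : ℝ) : ∑' i : ℕ, ((i:ℝ)-γ)^2 * qf γ i = γ * Real.exp γ := by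
  rw [tsum_congr (expandCc2 γ),
    Summable.tsum_add (sum2 γ) (((sum1 γ).mul_left (-2*γ)).add ((sum_q γ).mul_left (γ^2))),
    Summable.tsum_add ((sum1 γ).mul_left (-2*γ)) ((sum_q γ).mul_left (γ^2)),
    tsum_mul_left, tsum_mul_left, tsum1, tsum2, tsum_q]
  ring

lemma expandCc4 (γ : ℝ) (i : ℕ) :
    ((i:ℝ)-γ)^4 * qf γ i =
      (i:ℝ)^4 * qf γ i + ((-4*γ) * ((i:ℝ)^3 * qf γ i) + ((6*γ^2) * ((i:ℝ)^2 * qf γ i) +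
        ((-4*γ^3) * ((i:ℝ) * qf γ i) + γ^4 * qf γ i))) := by ring

lemma sumCc4 (γ : ℝ) : Summable (fun i : ℕ => ((i:ℝ)-γ)^4 * qf γ i) :=
  Summable.congr ((sum4 γ).add (((sum3 γ).mul_left (-4*γ)).add
    (((sum2 γ).mul_left (6*γ^2)).add (((sum1 γ).mul_left (-4*γ^3)).add
      ((sum_q γ).mul_left (γ^4)))))) (fun i => (expandCc4 γ i).symm)

lemma tsumCc4 (γ : ℝ) :
    ∑' i : ℕ, ((i:ℝ)-γ)^4 * qf γ i = (3*γ^2 + γ) * Real.exp γ := by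
  rw [tsum_congr (expandCc4 γ),
    Summable.tsum_add (sum4 γ) (((sum3 γ).mul_left (-4*γ)).add (((sum2 γ).mul_left (6*γ^2)).add
      (((sum1 γ).mul_left (-4*γ^3)).add ((sum_q γ).mul_left (γ^4))))),
    Summable.tsum_add ((sum3 γ).mul_left (-4*γ)) (((sum2 γ).mul_left (6*γ^2)).add
      (((sum1 γ).mul_left (-4*γ^3)).add ((sum_q γ).mul_left (γ^4)))),
    Summable.tsum_add ((sum2 γ).mul_left (6*γ^2)) (((sum1 γ).mul_left (-4*γ^3)).add
      ((sum_q γ).mul_left (γ^4))),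
    Summable.tsum_add ((sum1 γ).mul_left (-4*γ^3)) ((sum_q γ).mul_left (γ^4)),
    tsum_mul_left, tsum_mul_left, tsum_mul_left, tsum_mul_left,
    tsum1, tsum2, tsum3, tsum4, tsum_q]
  ring

lemma qf_def (γ : ℝ) (i : ℕ) : qf γ i = γ ^ i / (Nat.factorial i : ℝ) := rfl


lemma cube_le_aux {s u : ℝ} (hs : 0 < s) (hu : 0 ≤ u) :
    u^3 ≤ s*u^2 + u^4/(4*s) := by
  rw [← sub_nonneg]
  have expr : s*u^2 + u^4/(4*s) - u^3 = (4*s*(s*u^2) + u^4 - 4*s*u^3)/(4*s) := by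
    field_simp
  rw [expr]
  apply div_nonneg _ (by positivity)
  nlinarith [sq_nonneg (u*(u-2*s))]

lemma abs_pow_even (u : ℝ) : |u|^2 = u^2 ∧ |u|^4 = u^4 := by
  constructor
  · exact sq_abs u
  · rw [show (4:ℕ) = 2*2 from rfl, pow_mul, pow_mul, sq_abs]

lemma cube_pointwise {γ : ℝ} (hγ : 0 < γ) (i : ℕ) :
    |(i:ℝ)-γ|^3 * qf γ i ≤
      Real.sqrt γ * (((i:ℝ)-γ)^2 * qf γ i) + (((i:ℝ)-γ)^4 * qf γ i)/(4*Real.sqrt γ) := by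
  have hs : 0 < Real.sqrt γ := Real.sqrt_pos.2 hγ
  have h := cube_le_aux hs (abs_nonneg ((i:ℝ)-γ))
  obtain ⟨h2, h4⟩ := abs_pow_even ((i:ℝ)-γ)
  rw [h2, h4] at h
  have := mul_le_mul_of_nonneg_right h (qf_nonneg hγ.le i)
  calc |(i:ℝ)-γ|^3 * qf γ i
      ≤ (Real.sqrt γ * ((i:ℝ)-γ)^2 + ((i:ℝ)-γ)^4/(4*Real.sqrt γ)) * qf γ i := this
    _ = Real.sqrt γ * (((i:ℝ)-γ)^2 * qf γ i) + (((i:ℝ)-γ)^4 * qf γ i)/(4*Real.sqrt γ) := by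
        ring

lemma sumCube {γ : ℝ} (hγ : 0 < γ) :
    Summable (fun i : ℕ => |(i:ℝ)-γ|^3 * qf γ i) := by
  apply Summable.of_nonneg_of_le
    (fun i => mul_nonneg (by positivity) (qf_nonneg hγ.le i))
    (fun i => cube_pointwise hγ i)
  exact ((sumCc2 γ).mul_left _).add ((sumCc4 γ).div_const _)

lemma tsumCube_le {γ : ℝ} (hγ : 1 ≤ γ) :
    ∑' i : ℕ, |(i:ℝ)-γ|^3 * qf γ i ≤ 2*γ*Real.sqrt γ*Real.exp γ := by
  have hγ0 : (0:ℝ) < γ := lt_of_lt_of_le one_pos hγ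
  have hs : 0 < Real.sqrt γ := Real.sqrt_pos.2 hγ0
  have hss : Real.sqrt γ * Real.sqrt γ = γ := Real.mul_self_sqrt hγ0.le
  have hs1 : 1 ≤ Real.sqrt γ := by
    rw [show (1:ℝ) = Real.sqrt 1 from (Real.sqrt_one).symm]
    exact Real.sqrt_le_sqrt hγ
  have hE : 0 < Real.exp γ := Real.exp_pos γ
  have h1 : ∑' i : ℕ, |(i:ℝ)-γ|^3 * qf γ i ≤
      ∑' i : ℕ, (Real.sqrt γ * (((i:ℝ)-γ)^2 * qf γ i) +
        (((i:ℝ)-γ)^4 * qf γ i)/(4*Real.sqrt γ)) := by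
    apply Summable.tsum_le_tsum (cube_pointwise hγ0) (sumCube hγ0)
    exact ((sumCc2 γ).mul_left _).add ((sumCc4 γ).div_const _)
  rw [Summable.tsum_add ((sumCc2 γ).mul_left _) ((sumCc4 γ).div_const _),
    tsum_mul_left, tsum_div_const, tsumCc2, tsumCc4] at h1
  refine le_trans h1 ?_
  have key : (3*γ^2+γ) * Real.exp γ / (4*Real.sqrt γ) ≤ γ * Real.sqrt γ * Real.exp γ := by
    rw [div_le_iff₀ (by positivity),
      show γ*Real.sqrt γ*Real.exp γ*(4*Real.sqrt γ)
        = 4*(Real.sqrt γ*Real.sqrt γ)*γ*Real.exp γ from by ring, hss]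
    have hgg : γ ≤ γ^2 := by nlinarith
    nlinarith [hE.le, mul_le_mul_of_nonneg_right hgg hE.le]
  nlinarith [key, hE.le, hγ, hs.le, hss]

lemma cubeA_pointwise {γ : ℝ} (hγ : 0 < γ) (i : ℕ) :
    |(i:ℝ)+1-γ|^3 * qf γ i ≤ 4*(|(i:ℝ)-γ|^3 * qf γ i) + 4*qf γ i := by
  have h1 : |(i:ℝ)+1-γ| ≤ |(i:ℝ)-γ| + 1 := by
    have := abs_add_le ((i:ℝ)-γ) 1
    simp only [abs_one] at this
    calc |(i:ℝ)+1-γ| = |((i:ℝ)-γ) + 1| := by ring_nf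
      _ ≤ |(i:ℝ)-γ| + 1 := this
  have h2 : |(i:ℝ)+1-γ|^3 ≤ (|(i:ℝ)-γ|+1)^3 := by
    exact pow_le_pow_left₀ (abs_nonneg _) h1 3
  have h3 : (|(i:ℝ)-γ|+1)^3 ≤ 4*|(i:ℝ)-γ|^3 + 4 := by
    nlinarith [mul_nonneg (sq_nonneg (|(i:ℝ)-γ|-1)) (abs_nonneg ((i:ℝ)-γ)),
      sq_nonneg (|(i:ℝ)-γ|-1), abs_nonneg ((i:ℝ)-γ)]
  have h4 : |(i:ℝ)+1-γ|^3 ≤ 4*|(i:ℝ)-γ|^3 + 4 := le_trans h2 h3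
  have := mul_le_mul_of_nonneg_right h4 (qf_nonneg hγ.le i)
  calc |(i:ℝ)+1-γ|^3 * qf γ i ≤ (4*|(i:ℝ)-γ|^3 + 4) * qf γ i := this
    _ = 4*(|(i:ℝ)-γ|^3 * qf γ i) + 4*qf γ i := by ring

lemma sumCubeA {γ : ℝ} (hγ : 0 < γ) :
    Summable (fun i : ℕ => |(i:ℝ)+1-γ|^3 * qf γ i) := by
  apply Summable.of_nonneg_of_le
    (fun i => by have := qf_nonneg hγ.le i; positivity)
    (fun i => cubeA_pointwise hγ i)
  exact ((sumCube hγ).mul_left 4).add ((sum_q γ).mul_left 4)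

lemma tsumCubeA_le {γ : ℝ} (hγ : 1 ≤ γ) :
    ∑' i : ℕ, |(i:ℝ)+1-γ|^3 * qf γ i ≤ 12*γ*Real.sqrt γ*Real.exp γ := by
  have hγ0 : (0:ℝ) < γ := lt_of_lt_of_le one_pos hγ
  have hs1 : 1 ≤ Real.sqrt γ := by
    rw [show (1:ℝ) = Real.sqrt 1 from (Real.sqrt_one).symm]
    exact Real.sqrt_le_sqrt hγ
  have hE : 0 < Real.exp γ := Real.exp_pos γ
  have h1 : ∑' i : ℕ, |(i:ℝ)+1-γ|^3 * qf γ i ≤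
      ∑' i : ℕ, (4*(|(i:ℝ)-γ|^3 * qf γ i) + 4*qf γ i) := by
    apply Summable.tsum_le_tsum (cubeA_pointwise hγ0) (sumCubeA hγ0)
    exact ((sumCube hγ0).mul_left 4).add ((sum_q γ).mul_left 4)
  rw [Summable.tsum_add ((sumCube hγ0).mul_left 4) ((sum_q γ).mul_left 4),
    tsum_mul_left, tsum_mul_left, tsum_q] at h1
  have h2 := tsumCube_le hγ
  have h31 : 1 ≤ γ * Real.sqrt γ := by nlinarith [hγ, hs1]
  have h3 : Real.exp γ ≤ γ * Real.sqrt γ * Real.exp γ := by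
    nlinarith [h31, hE.le]
  nlinarith [h1, h2, h3, hE.le]

lemma sumCubeB {γ : ℝ} (hγ : 0 < γ) :
    Summable (fun i : ℕ => |(i:ℝ)+1-γ|^3 * qf γ (i+1)) := by
  have := (summable_nat_add_iff (f := fun j : ℕ => |(j:ℝ)-γ|^3 * qf γ j) 1).2 (sumCube hγ)
  apply this.congr
  intro i
  push_cast
  ring_nf

lemma tsumCubeB_le {γ : ℝ} (hγ : 1 ≤ γ) :
    ∑' i : ℕ, |(i:ℝ)+1-γ|^3 * qf γ (i+1) ≤ 2*γ*Real.sqrt γ*Real.exp γ := by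
  have hγ0 : (0:ℝ) < γ := lt_of_lt_of_le one_pos hγ
  have hshift : ∑' i : ℕ, |(i:ℝ)+1-γ|^3 * qf γ (i+1)
      = ∑' i : ℕ, |((i+1:ℕ):ℝ)-γ|^3 * qf γ (i+1) := by
    apply tsum_congr
    intro i
    push_cast
    ring_nf
  rw [hshift]
  have hfull := Summable.sum_add_tsum_nat_add (f := fun j : ℕ => |(j:ℝ)-γ|^3 * qf γ j) 1 (sumCube hγ0)
  have h0 : 0 ≤ |((0:ℕ):ℝ)-γ|^3 * qf γ 0 := by
    have := qf_nonneg hγ0.le 0; positivity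
  have : ∑' i : ℕ, |((i+1:ℕ):ℝ)-γ|^3 * qf γ (i+1) ≤ ∑' j : ℕ, |(j:ℝ)-γ|^3 * qf γ j := by
    rw [← hfull]
    simp only [Finset.range_one, Finset.sum_singleton]
    linarith
  exact le_trans this (tsumCube_le hγ)



lemma main_est {γ : ℝ} (hγ : 1 ≤ γ) :
    |γ * Real.exp (-γ) * (∑' i : ℕ, qf γ i * Real.log (((i:ℝ)+1)/γ)) - (1 - (γ+1)/(2*γ))|
      ≤ 5 / Real.sqrt γ := by
  have hγ0 : (0:ℝ) < γ := lt_of_lt_of_le one_pos hγ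
  have hγne : γ ≠ 0 := hγ0.ne'
  have hs : 0 < Real.sqrt γ := Real.sqrt_pos.2 hγ0
  have hss : Real.sqrt γ * Real.sqrt γ = γ := Real.mul_self_sqrt hγ0.le
  have hE : (0:ℝ) < Real.exp γ := Real.exp_pos γ
  have hEinv : Real.exp (-γ) * Real.exp γ = 1 := by
    rw [← Real.exp_add]; simp
  set c : ℕ → ℝ := fun i => qf γ i * Gfun (((i:ℝ)+1)/γ) with hc
  set D : ℕ → ℝ := fun i =>
    (|(i:ℝ)+1-γ|^3 * qf γ i + |(i:ℝ)+1-γ|^3 * qf γ (i+1)) / (3*γ^3) with hD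
  have hcD : ∀ i : ℕ, |c i| ≤ D i := by
    intro i
    have hti : (0:ℝ) < ((i:ℝ)+1)/γ := by positivity
    have hi1 : ((i:ℝ)+1) ≠ 0 := by positivity
    have habs : |((i:ℝ)+1)/γ - 1|^3 = |(i:ℝ)+1-γ|^3/γ^3 := by
      rw [show ((i:ℝ)+1)/γ - 1 = ((i:ℝ)+1-γ)/γ from by field_simp, abs_div,
        abs_of_pos hγ0, div_pow]
    have h1 : |c i| = qf γ i * |Gfun (((i:ℝ)+1)/γ)| := by
      rw [hc]
      simp only [abs_mul, abs_of_nonneg (qf_nonneg hγ0.le i)]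
    have h2 : |Gfun (((i:ℝ)+1)/γ)| ≤
        |((i:ℝ)+1)/γ - 1|^3/3 * (1 + 1/(((i:ℝ)+1)/γ)) := abs_Gfun_le hti
    rw [h1]
    calc qf γ i * |Gfun (((i:ℝ)+1)/γ)|
        ≤ qf γ i * (|((i:ℝ)+1)/γ - 1|^3/3 * (1 + 1/(((i:ℝ)+1)/γ))) :=
          mul_le_mul_of_nonneg_left h2 (qf_nonneg hγ0.le i)
      _ = D i := by
          rw [habs, hD]
          simp only
          rw [qf_succ γ i, one_div_div]
          field_simp
  have sumD : Summable D := ((sumCubeA hγ0).add (sumCubeB hγ0)).div_const _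
  have sumabsc : Summable (fun i => |c i|) :=
    Summable.of_nonneg_of_le (fun i => abs_nonneg _) hcD sumD
  have sumc : Summable c := summable_abs_iff.1 sumabsc
  have htsumD : ∑' i, D i ≤ 5*Real.sqrt γ*Real.exp γ/γ^2 := by
    rw [hD]
    simp only
    rw [tsum_div_const, Summable.tsum_add (sumCubeA hγ0) (sumCubeB hγ0)]
    calc ((∑' i : ℕ, |(i:ℝ)+1-γ|^3 * qf γ i) + ∑' i : ℕ, |(i:ℝ)+1-γ|^3 * qf γ (i+1))/(3*γ^3)
        ≤ (12*γ*Real.sqrt γ*Real.exp γ + 2*γ*Real.sqrt γ*Real.exp γ)/(3*γ^3) := by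
          gcongr
          · exact tsumCubeA_le hγ
          · exact tsumCubeB_le hγ
      _ ≤ 5*Real.sqrt γ*Real.exp γ/γ^2 := by
          rw [div_le_div_iff₀ (by positivity) (by positivity)]
          nlinarith [mul_nonneg (mul_nonneg hs.le hE.le) (by positivity : (0:ℝ) ≤ γ^3)]
  have hCabs : |∑' i, c i| ≤ 5*Real.sqrt γ*Real.exp γ/γ^2 := by
    calc |∑' i, c i| ≤ ∑' i, |c i| := by
          simpa [Real.norm_eq_abs] using
            norm_tsum_le_tsum_norm (f := c) (by simpa [Real.norm_eq_abs] using sumabsc)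
      _ ≤ ∑' i, D i := Summable.tsum_le_tsum hcD sumabsc sumD
      _ ≤ _ := htsumD
  have hsplit : ∀ i : ℕ, qf γ i * Real.log (((i:ℝ)+1)/γ)
      = ((1/γ) * (((i:ℝ)+1-γ) * qf γ i) - (1/(2*γ^2)) * (((i:ℝ)+1-γ)^2 * qf γ i)) + c i := by
    intro i
    rw [hc]
    simp only [Gfun]
    field_simp
    ring
  have suma := (sumC1 γ).mul_left (1/γ)
  have sumb := (sumC2 γ).mul_left (1/(2*γ^2))
  have hL : (∑' i : ℕ, qf γ i * Real.log (((i:ℝ)+1)/γ))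
      = (1/γ) * Real.exp γ - (1/(2*γ^2)) * ((γ+1) * Real.exp γ) + ∑' i, c i := by
    rw [tsum_congr hsplit, Summable.tsum_add (suma.sub sumb) sumc, Summable.tsum_sub suma sumb,
      tsum_mul_left, tsum_mul_left, tsumC1, tsumC2]
  have hkey : γ * Real.exp (-γ) * (∑' i : ℕ, qf γ i * Real.log (((i:ℝ)+1)/γ))
        - (1 - (γ+1)/(2*γ))
      = γ * Real.exp (-γ) * (∑' i, c i)
        + (Real.exp (-γ) * Real.exp γ - 1) * (1 - (γ+1)/(2*γ)) := by
    rw [hL]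
    field_simp
    ring
  rw [hkey, hEinv]
  simp only [sub_self, zero_mul, add_zero]
  rw [abs_mul, abs_of_pos (by positivity : (0:ℝ) < γ * Real.exp (-γ))]
  calc γ * Real.exp (-γ) * |∑' i, c i|
      ≤ γ * Real.exp (-γ) * (5*Real.sqrt γ*Real.exp γ/γ^2) :=
        mul_le_mul_of_nonneg_left hCabs (by positivity)
    _ = 5 / Real.sqrt γ := by
        rw [show γ * Real.exp (-γ) * (5*Real.sqrt γ*Real.exp γ/γ^2)
          = (Real.exp (-γ)*Real.exp γ) * (5*Real.sqrt γ/γ) from by field_simp,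
          hEinv, one_mul, div_eq_div_iff hγne hs.ne', mul_assoc, hss]

lemma tendsto_sqrt_atTop' : Tendsto Real.sqrt atTop atTop := by
  apply tendsto_atTop_atTop_of_monotone (fun a b h => Real.sqrt_le_sqrt h)
  intro b
  exact ⟨b^2, by rw [Real.sqrt_sq_eq_abs]; exact le_abs_self b⟩

lemma tendsto_bound : Tendsto (fun γ : ℝ => 5 / Real.sqrt γ) atTop (nhds 0) := by
  have h := tendsto_sqrt_atTop'.inv_tendsto_atTop
  have h2 := h.const_mul (5:ℝ)
  simp only [mul_zero] at h2
  apply h2.congr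
  intro γ
  simp [div_eq_mul_inv, Pi.inv_apply]

lemma base_tendsto : Tendsto (fun γ : ℝ => 1 - (γ+1)/(2*γ)) atTop (nhds (1/2)) := by
  have h1 : Tendsto (fun γ : ℝ => 1/(2*γ)) atTop (nhds 0) := by
    have h := (tendsto_id.const_mul_atTop (show (0:ℝ) < 2 from two_pos)).inv_tendsto_atTop
    apply h.congr
    intro γ
    simp [one_div, Pi.inv_apply, id]
  have h2 : Tendsto (fun γ : ℝ => 1/2 - 1/(2*γ)) atTop (nhds (1/2)) := by
    simpa using tendsto_const_nhds.sub h1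
  apply Tendsto.congr' _ h2
  filter_upwards [eventually_ge_atTop (1:ℝ)] with γ hγ
  have hγ0 : γ ≠ 0 := by positivity
  field_simp
  ring

theorem uncoordinated_uniform_rate_limit_at_infty :
    Tendsto (fun γ : ℝ =>
        γ * ∑' i : ℕ,
          γ ^ i / (Nat.factorial i) * Real.exp (-γ) * Real.logb 2 ((i + 1 : ℝ) / γ))
      atTop (nhds (Real.logb 2 (Real.exp 1) / 2)) := by
  have hlog2 : Real.log 2 ≠ 0 := by
    have := Real.log_pos (by norm_num : (1:ℝ) < 2)
    linarith
  -- the key function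
  set F : ℝ → ℝ := fun γ => γ * Real.exp (-γ) *
    (∑' i : ℕ, qf γ i * Real.log (((i:ℝ)+1)/γ)) with hF
  have hR : Tendsto (fun γ => F γ - (1 - (γ+1)/(2*γ))) atTop (nhds 0) := by
    apply tendsto_of_tendsto_of_tendsto_of_le_of_le'
      ((tendsto_bound.neg).congr (fun γ => rfl) |>.mono_right (by simp))
      tendsto_bound
    · filter_upwards [eventually_ge_atTop (1:ℝ)] with γ hγ
      have h := (abs_le.1 (main_est hγ)).1
      simp only [hF]
      linarith
    · filter_upwards [eventually_ge_atTop (1:ℝ)] with γ hγ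
      have h := (abs_le.1 (main_est hγ)).2
      simp only [hF]
      linarith
  have hFt : Tendsto F atTop (nhds (1/2)) := by
    have := base_tendsto.add hR
    norm_num at this
    apply this.congr
    intro γ
    ring
  have hfinal := hFt.const_mul (1/Real.log 2)
  have hval : Real.logb 2 (Real.exp 1) / 2 = (1/Real.log 2) * (1/2) := by
    rw [Real.logb, Real.log_exp]
    ring
  rw [hval]
  apply hfinal.congr
  intro γ
  have hts : ∑' i : ℕ,
      γ ^ i / (Nat.factorial i) * Real.exp (-γ) * Real.logb 2 ((i + 1 : ℝ) / γ)
      = (Real.exp (-γ) / Real.log 2) * ∑' i : ℕ, qf γ i * Real.log (((i:ℝ)+1)/γ) := by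
    rw [← tsum_mul_left]
    apply tsum_congr
    intro i
    rw [Real.logb, qf_def]
    ring
  rw [hts]
  ring
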